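/- Let W = δ(U(π,u,yu)) ∈ T_I(G) satisfy ζ(W) = δ(U(π̂,u,ŷu)) ≠ W, where the ζ-move swaps terminal subpaths of π_{u_j}, π_{u_{j'}} at the central vertex of G_{J_p}. Then cdncross(ζ(W)) = cdncross(W) if the triple (π_{u_j},π_{u_{j'}},p) is proper, cdncross(ζ(W)) = cdncross(W) − 1 if it is a defective noncrossing, and cdncross(ζ(W)) = cdncross(W) + 1 if it is a defective crossing. -/

import Mathlib

/- Common combinatorial setup: star networks, covering path families,
   crossing/noncrossing statistics, and the base ring ℤ[q^{1/2},q^{-1/2}]. -/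

open Equiv Finset
open scoped Classical

noncomputable section

/-- The ring `ℤ[q^{1/2}, q^{-1/2}]`, realized as Laurent polynomials in the
variable `q^{1/2}` (so the exponent-`k` monomial is `q^{k/2}`). -/
abbrev R2 : Type := LaurentPolynomial ℤ

/-- `q^{k/2}`. -/
def Qp (k : ℤ) : R2 := LaurentPolynomial.T k

/-- `q`. -/
def qq : R2 := LaurentPolynomial.T 2

/-- Coxeter length of a permutation, i.e. its inversion number. -/
def len {n : ℕ} (w : Perm (Fin n)) : ℕ :=
  ((univ : Finset (Fin n × Fin n)).filter fun p => p.1 < p.2 ∧ w p.2 < w p.1).card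

/-- Membership in the interval `J = [a,b] ⊆ [n]`. -/
def memJ {n : ℕ} (J : Fin n × Fin n) (i : Fin n) : Prop := J.1 ≤ i ∧ i ≤ J.2

/-- Membership in the subgroup `S_J ≤ S_n` generated by the adjacent
transpositions `s_a, …, s_{b-1}` of the interval `J = [a,b]`; equivalently,
the permutations supported on `[a,b]`. -/
def inSJ {n : ℕ} (J : Fin n × Fin n) (w : Perm (Fin n)) : Prop :=
  ∀ i, w i ≠ i → memJ J i

/-- A path family covering the star network `G_{J_1} ∘ ⋯ ∘ G_{J_m}` is
faithfully encoded by the permutation of the wire positions realized at each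
simple-star factor: at factor `p` the paths whose current positions lie in
`J_p` pass through the central vertex and are permuted arbitrarily within
`J_p` (every entering and leaving edge being used exactly once), while all
other paths use their unique horizontal edge.  Thus a covering family is a
sequence `vs` of permutations with `vs p` supported on `J_p`. -/
def IsPathFamily {n m : ℕ} (Js : Fin m → Fin n × Fin n)
    (vs : Fin m → Perm (Fin n)) : Prop :=
  ∀ p, inSJ (Js p) (vs p)

/-- The position of the path starting at source `i` just before factor `k`
(as a permutation of sources). -/
def posAt {n m : ℕ} (vs : Fin m → Perm (Fin n)) (k : ℕ) : Perm (Fin n) :=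
  (((List.ofFn vs).take k).reverse).prod

/-- The type of a covering path family: the path starting at source `i`
terminates at sink `typeOf vs i`. -/
def typeOf {n m : ℕ} (vs : Fin m → Perm (Fin n)) : Perm (Fin n) := posAt vs m

/-- The path from source `i` passes through the central vertex of the factor
`G_{J_p}`. -/
def centeredAt {n m : ℕ} (Js : Fin m → Fin n × Fin n) (vs : Fin m → Perm (Fin n))
    (p : Fin m) (i : Fin n) : Prop :=
  (Js p).1 < (Js p).2 ∧ memJ (Js p) (posAt vs p i)

/-- The paths from sources `i` and `j` both pass through the central vertex of
the factor `G_{J_p}`. -/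
def meetAt {n m : ℕ} (Js : Fin m → Fin n × Fin n) (vs : Fin m → Perm (Fin n))
    (p : Fin m) (i j : Fin n) : Prop :=
  centeredAt Js vs p i ∧ centeredAt Js vs p j

/-- The triple `(π_i, π_j, p)` is a crossing: the two paths intersect at the
central vertex of `G_{J_p}` and cross there. -/
def crossingAt {n m : ℕ} (Js : Fin m → Fin n × Fin n) (vs : Fin m → Perm (Fin n))
    (p : Fin m) (i j : Fin n) : Prop :=
  meetAt Js vs p i j ∧
    ¬ ((posAt vs p i < posAt vs p j) ↔ (posAt vs (p.1 + 1) i < posAt vs (p.1 + 1) j))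

/-- `cross(π)`: the number of crossings of the path family. -/
def crossNum {n m : ℕ} (Js : Fin m → Fin n × Fin n)
    (vs : Fin m → Perm (Fin n)) : ℕ :=
  ((univ : Finset ((Fin n × Fin n) × Fin m)).filter fun x =>
    x.1.1 < x.1.2 ∧ crossingAt Js vs x.2 x.1.1 x.1.2).card

/-- The triple `(π_i, π_j, p)` is a noncrossing with `π_i` entering and
leaving the central vertex of `G_{J_p}` below `π_j`. -/
def noncrossBelow {n m : ℕ} (Js : Fin m → Fin n × Fin n) (vs : Fin m → Perm (Fin n))
    (p : Fin m) (i j : Fin n) : Prop :=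
  meetAt Js vs p i j ∧
    posAt vs p i < posAt vs p j ∧ posAt vs (p.1 + 1) i < posAt vs (p.1 + 1) j

/-- `incross(U)` for a tableau `U` containing the paths of `π`, recorded via
the function `col` assigning to each path (index) the index of the column of
`U` containing it: the number of inverted noncrossings, i.e. noncrossings
`(π_i, π_j, p)` (with `π_i` below `π_j`) such that `π_j` lies in an earlier
column of `U` than `π_i`. -/
def incrossNum {n m : ℕ} (Js : Fin m → Fin n × Fin n) (vs : Fin m → Perm (Fin n))
    (col : Fin n → ℕ) : ℕ :=
  ((univ : Finset ((Fin n × Fin n) × Fin m)).filter fun x =>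
    noncrossBelow Js vs x.2 x.1.1 x.1.2 ∧ col x.1.2 < col x.1.1).card

/-- The number of crossings of the two paths `π_i, π_j` strictly before the
factor `G_{J_p}`. -/
def crossBefore {n m : ℕ} (Js : Fin m → Fin n × Fin n) (vs : Fin m → Perm (Fin n))
    (p : Fin m) (i j : Fin n) : ℕ :=
  ((univ : Finset (Fin m)).filter fun k => k < p ∧ crossingAt Js vs k i j).card

/-- The triple `(π_i, π_j, p)` is defective: the paths meet at the central
vertex of `G_{J_p}` having previously crossed an odd number of times. -/
def defectiveAt {n m : ℕ} (Js : Fin m → Fin n × Fin n) (vs : Fin m → Perm (Fin n))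
    (p : Fin m) (i j : Fin n) : Prop :=
  meetAt Js vs p i j ∧ Odd (crossBefore Js vs p i j)

/-- `dfct(π)`: the number of defective triples of the path family. -/
def dfctNum {n m : ℕ} (Js : Fin m → Fin n × Fin n)
    (vs : Fin m → Perm (Fin n)) : ℕ :=
  ((univ : Finset ((Fin n × Fin n) × Fin m)).filter fun x =>
    x.1.1 < x.1.2 ∧ defectiveAt Js vs x.2 x.1.1 x.1.2).card

/-- `cdncross(W)`: the number of defective noncrossings between pairs of
paths appearing in the same column of the tableau recorded by `col`. -/
def cdncrossNum {n m : ℕ} (Js : Fin m → Fin n × Fin n) (vs : Fin m → Perm (Fin n))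
    (col : Fin n → ℕ) : ℕ :=
  ((univ : Finset ((Fin n × Fin n) × Fin m)).filter fun x =>
    x.1.1 < x.1.2 ∧ defectiveAt Js vs x.2 x.1.1 x.1.2 ∧
      ¬ crossingAt Js vs x.2 x.1.1 x.1.2 ∧ col x.1.1 = col x.1.2).card

/-- The adjacent transposition `s_{i+1}` (0-indexed: swaps positions `i` and
`i+1`). -/
def swp {n : ℕ} (i : ℕ) (h : i + 1 < n) : Perm (Fin n) :=
  Equiv.swap ⟨i, by omega⟩ ⟨i + 1, h⟩

end
/- Young subgroups, minimal coset representatives, the induced sign character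
`ε_q^λ`, and column-strict tableaux (encoded by column assignments). -/

noncomputable section
open Equiv Finset
open scoped Classical

/-- Given a composition `lam = (λ_1, …, λ_r)` of `n`, the index of the block
`B_k = [λ_1 + ⋯ + λ_{k-1} + 1, λ_1 + ⋯ + λ_k]` containing the (0-indexed)
position `i`. -/
def blockIdx (lam : List ℕ) (i : ℕ) : ℕ :=
  ((List.range lam.length).filter fun k => (lam.take (k + 1)).sum ≤ i).length

/-- Membership in the Young subgroup `S_λ`: the permutations preserving each
block `B_k`. -/
def inYoung {n : ℕ} (lam : List ℕ) (w : Perm (Fin n)) : Prop :=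
  ∀ i : Fin n, blockIdx lam ((w i : Fin n) : ℕ) = blockIdx lam (i : ℕ)

/-- `u` is the minimum-length representative of its coset `S_λ u`
(in the paper's conventions, of the left coset `u S_λ` used in the
factorization `w = w_- w^*`): `u` has no inversions whose two values lie in a
common block. -/
def isMinRep {n : ℕ} (lam : List ℕ) (u : Perm (Fin n)) : Prop :=
  ∀ i j : Fin n, i < j →
    blockIdx lam ((u i : Fin n) : ℕ) = blockIdx lam ((u j : Fin n) : ℕ) →
      u i < u j

/-- The induced sign character `ε_q^λ = sgn ↑_{H_λ(q)}^{H_n(q)}`, computed in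
the natural basis: `H_n(q)` is a free right `H_λ(q)`-module with basis
`{T_u}` indexed by the minimum-length coset representatives, every basis
element factors as `T_{τ∘u} = T_u T_τ` with `τ ∈ S_λ`, the sign character
sends `T_τ` to `(-1)^{ℓ(τ)}`, and the character of the induced module
`H_n(q) ⊗_{H_λ(q)} sgn` is obtained by summing the diagonal coefficients. -/
def epsChar {n : ℕ} {H : Type*} [Ring H] [Algebra R2 H] (lam : List ℕ)
    (T : Module.Basis (Perm (Fin n)) R2 H) (h : H) : R2 :=
  ∑ u ∈ (univ : Finset (Perm (Fin n))).filter (fun u => isMinRep lam u),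
    ∑ τ ∈ (univ : Finset (Perm (Fin n))).filter (fun τ => inYoung lam τ),
      (-1 : R2) ^ len τ * T.repr (h * T u) (τ * u)

/-- A column-strict tableau of shape `λᵗ` (whose columns therefore have
lengths `λ_1, …, λ_r`) filled with the paths of a covering path family of
type `typeOf vs`, encoded by the assignment `f` sending each path to the
index of its column: column `k` must have `λ_k` entries, and since the
entries of a column are arranged bottom-to-top in increasing order of source
index, column-strictness says that the sink indices of the paths in a common
column also increase with the source indices. -/
def IsColStrictAssign {n m : ℕ} (lam : List ℕ) (vs : Fin m → Perm (Fin n))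
    (f : Fin n → Fin lam.length) : Prop :=
  (∀ k : Fin lam.length,
      ((univ : Finset (Fin n)).filter fun i => f i = k).card = lam.get k) ∧
    ∀ i j : Fin n, f i = f j → i < j → typeOf vs i < typeOf vs j

end
/- The data of the involution ζ on the tableau set T_I.  An ordered set
partition `I = (I_1, …, I_r)` of `[n]` of type `λ` is encoded by the
permutation `u = u(I)` (increasing on each block `B_k`, with `I_k = u(B_k)`);
an element `U(π, u, yu)` of `U_I(G)` is encoded by the covering path family
`π` (with `typeOf π = u ∘ y ∘ u⁻¹` for some `y ∈ S_λ`); its image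
`W = δ(U(π,u,yu)) ∈ T_I(G)` is the tableau of shape `λᵗ` whose `k`-th column
contains the paths with sources in `I_k`, so the column of the path `i` in
`W` is `colOf lam u i`. -/

noncomputable section
open Equiv Finset
open scoped Classical

/-- The column of the path `π_i` in the tableau `δ(U(π,u,yu)) ∈ T_I`. -/
def colOf {n : ℕ} (lam : List ℕ) (u : Perm (Fin n)) (i : Fin n) : ℕ :=
  blockIdx lam ((u⁻¹ i : Fin n) : ℕ)

/-- Column `c` of the tableau `δ(U(π,u,yu))` is column-strict: its sink
indices increase (bottom to top) together with its source indices. -/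
def colStrictCol {n m : ℕ} (lam : List ℕ) (u : Perm (Fin n))
    (vs : Fin m → Perm (Fin n)) (c : ℕ) : Prop :=
  ∀ i i' : Fin n, colOf lam u i = c → colOf lam u i' = c → i < i' →
    typeOf vs i < typeOf vs i'

/-- The path family obtained by swapping the terminal subpaths of the paths
from sources `i` and `i'`, beginning at the central vertex of the factor
`G_{J_p}`: the permutation realized at factor `p` is composed with the
transposition of the two leaving positions. -/
def zetaSwap {n m : ℕ} (vs : Fin m → Perm (Fin n)) (p : Fin m)
    (i i' : Fin n) : Fin m → Perm (Fin n) :=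
  fun k => if k = p then
    Equiv.swap (posAt vs (p.1 + 1) i) (posAt vs (p.1 + 1) i') * vs p
  else vs k

/-- The data entering the definition of the involution `ζ = ζ_I` at a
non-column-strict tableau `W = δ(U(π,u,yu)) ∈ T_I(G)`:
`tc` is the greatest index of a non-column-strict column of `W`; `p` is the
greatest index such that at least two paths of column `tc` pass through the
interior vertex of `G_{J_p}`; and `j, j'` are the two positions in block `tc`
whose paths `π_{u_j}, π_{u_{j'}}` (through that vertex) have the
right-to-left lexicographically greatest pair of sink indices, normalized so
that the sink of `π_{u_{j'}}` is the larger.  Then `ζ(W)` is obtained from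
`W` by replacing `π` with `zetaSwap vs p (u j) (u j')`. -/
structure ZetaData {n m : ℕ} (Js : Fin m → Fin n × Fin n) (lam : List ℕ)
    (u : Perm (Fin n)) (vs : Fin m → Perm (Fin n)) : Type where
  tc : ℕ
  p : Fin m
  j : Fin n
  j' : Fin n
  htc : ¬ colStrictCol lam u vs tc
  htcMax : ∀ c : ℕ, tc < c → colStrictCol lam u vs c
  hpMeet : ∃ i i' : Fin n, i ≠ i' ∧ colOf lam u i = tc ∧ colOf lam u i' = tc ∧
    centeredAt Js vs p i ∧ centeredAt Js vs p i'
  hpMax : ∀ p' : Fin m, p < p' →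
    ¬ ∃ i i' : Fin n, i ≠ i' ∧ colOf lam u i = tc ∧ colOf lam u i' = tc ∧
      centeredAt Js vs p' i ∧ centeredAt Js vs p' i'
  hne : j ≠ j'
  hjcol : blockIdx lam (j : ℕ) = tc
  hjcol' : blockIdx lam (j' : ℕ) = tc
  hjcent : centeredAt Js vs p (u j)
  hjcent' : centeredAt Js vs p (u j')
  hord : typeOf vs (u j) < typeOf vs (u j')
  hmax : ∀ k k' : Fin n, k ≠ k' →
    blockIdx lam (k : ℕ) = tc → blockIdx lam (k' : ℕ) = tc →
    centeredAt Js vs p (u k) → centeredAt Js vs p (u k') →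
    typeOf vs (u k) < typeOf vs (u k') →
    (typeOf vs (u k') < typeOf vs (u j') ∨
      (k' = j' ∧ typeOf vs (u k) ≤ typeOf vs (u j)))

/-- The number `b` of paths of `π` which enter the factor `G_{J_p}` between
the paths from sources `i` and `i'`, and which also leave `G_{J_p}` between
the same two paths. -/
def betweenNum {n m : ℕ} (Js : Fin m → Fin n × Fin n) (vs : Fin m → Perm (Fin n))
    (p : Fin m) (i i' : Fin n) : ℕ :=
  ((univ : Finset (Fin n)).filter fun x =>
    x ≠ i ∧ x ≠ i' ∧ centeredAt Js vs p x ∧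
      (min (posAt vs p i) (posAt vs p i') < posAt vs p x ∧
        posAt vs p x < max (posAt vs p i) (posAt vs p i')) ∧
      (min (posAt vs (p.1 + 1) i) (posAt vs (p.1 + 1) i') < posAt vs (p.1 + 1) x ∧
        posAt vs (p.1 + 1) x < max (posAt vs (p.1 + 1) i) (posAt vs (p.1 + 1) i'))).card

end

noncomputable section
open Equiv Finset
open scoped Classical

lemma posAt_succ {n m : ℕ} (vs : Fin m → Perm (Fin n)) (k : ℕ) (hk : k < m) :
    posAt vs (k+1) = vs ⟨k, hk⟩ * posAt vs k := by
  unfold posAt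
  rw [List.take_succ]
  have h1 : (List.ofFn vs)[k]? = some (vs ⟨k, hk⟩) := by
    simp [List.getElem?_ofFn, hk]
  rw [h1]
  simp

lemma posAt_zero {n m : ℕ} (vs : Fin m → Perm (Fin n)) : posAt vs 0 = 1 := by
  simp [posAt]


lemma posAt_zetaSwap {n m : ℕ} (vs : Fin m → Perm (Fin n)) (p : Fin m) (i i' : Fin n) :
    ∀ k, k ≤ m → posAt (zetaSwap vs p i i') k =
      if k ≤ p.1 then posAt vs k else posAt vs k * Equiv.swap i i' := by
  intro k hk
  induction k with
  | zero => simp [posAt_zero, Nat.zero_le]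
  | succ k ih =>
    have hkm : k < m := hk
    have ih' := ih (le_of_lt hkm)
    rw [posAt_succ _ k hkm, posAt_succ vs k hkm]
    rcases lt_trichotomy k p.1 with h | h | h
    · have hne : (⟨k, hkm⟩ : Fin m) ≠ p := by
        intro hEq; exact absurd (congrArg Fin.val hEq) (Nat.ne_of_lt h)
      rw [if_pos (le_of_lt h)] at ih'
      rw [if_pos (Nat.succ_le_of_lt h), ih']
      simp [zetaSwap, hne]
    · have hpe : (⟨k, hkm⟩ : Fin m) = p := Fin.ext h
      rw [if_pos (le_of_eq h)] at ih'
      rw [if_neg (by omega), ih']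
      rw [zetaSwap]
      simp only [if_pos hpe]
      have hw : posAt vs (p.1 + 1) = vs p * posAt vs p.1 := by
        have := posAt_succ vs p.1 p.isLt
        simpa using this
      subst hpe
      simp only [Fin.eta] at *
      rw [hw, Equiv.swap_apply_apply]
      group
    · have hne : (⟨k, hkm⟩ : Fin m) ≠ p := by
        intro hEq; exact absurd (congrArg Fin.val hEq) (Nat.ne_of_gt h)
      rw [if_neg (by omega)] at ih'
      rw [if_neg (by omega), ih']
      simp [zetaSwap, hne, mul_assoc]

lemma posAt_hat_le {n m : ℕ} (vs : Fin m → Perm (Fin n)) (p : Fin m) (i i' : Fin n)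
    (k : ℕ) (hk : k ≤ m) (hkp : k ≤ p.1) :
    posAt (zetaSwap vs p i i') k = posAt vs k := by
  rw [posAt_zetaSwap vs p i i' k hk, if_pos hkp]

lemma posAt_hat_gt {n m : ℕ} (vs : Fin m → Perm (Fin n)) (p : Fin m) (i i' : Fin n)
    (k : ℕ) (hk : k ≤ m) (hkp : p.1 < k) (x : Fin n) :
    posAt (zetaSwap vs p i i') k x = posAt vs k (Equiv.swap i i' x) := by
  rw [posAt_zetaSwap vs p i i' k hk, if_neg (not_le.mpr hkp)]; rfl

lemma flip_centered {n m : ℕ} (Js : Fin m → Fin n × Fin n)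
    (hJs : ∀ q, (Js q).1 ≤ (Js q).2) (vs : Fin m → Perm (Fin n))
    (hvs : IsPathFamily Js vs) (q : Fin m) (x y : Fin n) (hxy : x ≠ y)
    (hflip : ¬ ((posAt vs q x < posAt vs q y) ↔
      (posAt vs (q.1+1) x < posAt vs (q.1+1) y))) :
    centeredAt Js vs q x ∧ centeredAt Js vs q y := by
  have hsucc : posAt vs (q.1+1) = vs q * posAt vs q.1 := by
    have := posAt_succ vs q.1 q.isLt; simpa using this
  set w := posAt vs (q.1 : ℕ) with hw
  set f := vs q with hf
  rw [hsucc] at hflip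
  simp only [Equiv.Perm.mul_apply] at hflip
  have hfix : ∀ c, ¬ memJ (Js q) c → f c = c := by
    intro c hc; by_contra h; exact hc (hvs q c h)
  have hcl : ∀ c, memJ (Js q) c → memJ (Js q) (f c) := by
    intro c hc
    by_contra h
    have h2 : f (f c) = f c := hfix _ h
    have h3 : f c = c := f.injective h2
    rw [h3] at h; exact h hc
  have hne : w x ≠ w y := fun h => hxy (w.injective h)
  have houtside : ∀ c d : Fin n, memJ (Js q) c → ¬ memJ (Js q) d →
      ((c < d) ↔ (f c < d)) := by
    intro c d hc hd
    obtain ⟨hfc1, hfc2⟩ : (Js q).1 ≤ f c ∧ f c ≤ (Js q).2 := hcl c hc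
    obtain ⟨hc1, hc2⟩ : (Js q).1 ≤ c ∧ c ≤ (Js q).2 := hc
    have hd' : d < (Js q).1 ∨ (Js q).2 < d := by
      by_contra h
      push_neg at h
      exact hd ⟨h.1, h.2⟩
    rcases hd' with h | h
    · have h1 : d < c := lt_of_lt_of_le h hc1
      have h2 : d < f c := lt_of_lt_of_le h hfc1
      exact iff_of_false (not_lt.mpr h1.le) (not_lt.mpr h2.le)
    · exact iff_of_true (lt_of_le_of_lt hc2 h) (lt_of_le_of_lt hfc2 h)
  by_cases ma : memJ (Js q) (w x)
  · by_cases mb : memJ (Js q) (w y)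
    · have hlt : (Js q).1 < (Js q).2 := by
        rcases lt_or_eq_of_le (hJs q) with h | h
        · exact h
        · exfalso
          obtain ⟨ma1, ma2⟩ : (Js q).1 ≤ w x ∧ w x ≤ (Js q).2 := ma
          obtain ⟨mb1, mb2⟩ : (Js q).1 ≤ w y ∧ w y ≤ (Js q).2 := mb
          apply hne
          have e1 : w x = (Js q).1 := le_antisymm (by rw [h]; exact ma2) ma1
          have e2 : w y = (Js q).1 := le_antisymm (by rw [h]; exact mb2) mb1
          rw [e1, e2]
      exact ⟨⟨hlt, ma⟩, hlt, mb⟩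
    · exfalso
      apply hflip
      have hfy : f (w y) = w y := hfix _ mb
      rw [hfy]
      have h1 := houtside (w x) (w y) ma mb
      constructor
      · intro h; exact (houtside (w x) (w y) ma mb).mp h
      · intro h; exact (houtside (w x) (w y) ma mb).mpr h
  · by_cases mb : memJ (Js q) (w y)
    · exfalso
      apply hflip
      have hfx : f (w x) = w x := hfix _ ma
      rw [hfx]
      have key : ∀ c d : Fin n, memJ (Js q) d → ¬ memJ (Js q) c →
          ((c < d) ↔ (c < f d)) := by
        intro c d hd hc
        have h1 := houtside d c hd hc
        have h2 : (d < c) ↔ (f d < c) := h1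
        have hdne : f d ≠ c := by
          intro h
          apply hc; rw [← h]; exact hcl d hd
        have hdc : d ≠ c := by
          intro h; apply hc; rw [← h]; exact hd
        constructor
        · intro h
          rcases lt_trichotomy c (f d) with h' | h' | h'
          · exact h'
          · exact absurd h'.symm hdne
          · exact absurd (h2.mpr h') (not_lt.mpr (le_of_lt h))
        · intro h
          rcases lt_trichotomy c d with h' | h' | h'
          · exact h'
          · exact absurd h'.symm hdc
          · exact absurd (h2.mp h') (not_lt.mpr (le_of_lt h))
      exact key (w x) (w y) mb ma
    · exfalso
      apply hflip
      rw [hfix _ ma, hfix _ mb]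

lemma order_stable {n m : ℕ} (Js : Fin m → Fin n × Fin n)
    (hJs : ∀ q, (Js q).1 ≤ (Js q).2)
    (vs : Fin m → Perm (Fin n)) (hvs : IsPathFamily Js vs)
    (lam : List ℕ) (u : Perm (Fin n)) (tc : ℕ) (p : Fin m)
    (hpMax : ∀ p' : Fin m, p < p' →
      ¬ ∃ a b : Fin n, a ≠ b ∧ colOf lam u a = tc ∧ colOf lam u b = tc ∧
        centeredAt Js vs p' a ∧ centeredAt Js vs p' b)
    (x y : Fin n) (hxy : x ≠ y) (hcx : colOf lam u x = tc) (hcy : colOf lam u y = tc) :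
    ∀ k, p.1 + 1 ≤ k → k ≤ m →
      ((posAt vs k x < posAt vs k y) ↔
        (posAt vs (p.1+1) x < posAt vs (p.1+1) y)) := by
  intro k hk hkm
  induction k, hk using Nat.le_induction with
  | base => exact Iff.rfl
  | succ k hk ih =>
    have hkm' : k < m := hkm
    have ih' := ih (le_of_lt hkm')
    by_cases h : (posAt vs k x < posAt vs k y) ↔ (posAt vs (k+1) x < posAt vs (k+1) y)
    · exact (h.symm.trans ih')
    · exfalso
      have hfl : ¬ ((posAt vs ((⟨k, hkm'⟩ : Fin m) : ℕ) x < posAt vs ((⟨k, hkm'⟩ : Fin m) : ℕ) y) ↔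
          (posAt vs ((⟨k, hkm'⟩ : Fin m).1 + 1) x < posAt vs ((⟨k, hkm'⟩ : Fin m).1 + 1) y)) := h
      have hc := flip_centered Js hJs vs hvs ⟨k, hkm'⟩ x y hxy hfl
      exact hpMax ⟨k, hkm'⟩ (by rw [Fin.lt_def]; exact Nat.lt_of_succ_le hk)
        ⟨x, y, hxy, hcx, hcy, hc.1, hc.2⟩

lemma not_iff_lt_flip {α : Type*} [LinearOrder α] {a b a2 b2 : α} (h : a ≠ b) (h2 : a2 ≠ b2) :
    (¬ ((a < b) ↔ (a2 < b2))) ↔ (¬ ((b < a) ↔ (b2 < a2))) := by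
  have ha : b < a ↔ ¬ a < b :=
    ⟨fun h1 => not_lt.mpr h1.le, fun h1 => (lt_or_gt_of_ne h).resolve_left h1⟩
  have hb : b2 < a2 ↔ ¬ a2 < b2 :=
    ⟨fun h1 => not_lt.mpr h1.le, fun h1 => (lt_or_gt_of_ne h2).resolve_left h1⟩
  rw [ha, hb]; tauto

lemma meetAt_comm {n m : ℕ} (Js : Fin m → Fin n × Fin n) (vs : Fin m → Perm (Fin n))
    (q : Fin m) (x y : Fin n) : meetAt Js vs q x y ↔ meetAt Js vs q y x := And.comm

lemma crossingAt_comm {n m : ℕ} (Js : Fin m → Fin n × Fin n) (vs : Fin m → Perm (Fin n))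
    (q : Fin m) (x y : Fin n) (hxy : x ≠ y) :
    crossingAt Js vs q x y ↔ crossingAt Js vs q y x := by
  have h1 : posAt vs q x ≠ posAt vs q y := fun h => hxy ((posAt vs q).injective h)
  have h2 : posAt vs (q.1+1) x ≠ posAt vs (q.1+1) y :=
    fun h => hxy ((posAt vs (q.1+1)).injective h)
  unfold crossingAt
  rw [meetAt_comm, not_iff_lt_flip h1 h2]

lemma crossBefore_comm {n m : ℕ} (Js : Fin m → Fin n × Fin n) (vs : Fin m → Perm (Fin n))
    (k : Fin m) (x y : Fin n) (hxy : x ≠ y) :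
    crossBefore Js vs k x y = crossBefore Js vs k y x := by
  unfold crossBefore
  congr 1
  apply Finset.filter_congr
  intro q _
  rw [crossingAt_comm Js vs q x y hxy]

lemma defectiveAt_comm {n m : ℕ} (Js : Fin m → Fin n × Fin n) (vs : Fin m → Perm (Fin n))
    (k : Fin m) (x y : Fin n) (hxy : x ≠ y) :
    defectiveAt Js vs k x y ↔ defectiveAt Js vs k y x := by
  unfold defectiveAt
  rw [meetAt_comm, crossBefore_comm Js vs k x y hxy]

lemma card_filter_split {α : Type*} [Fintype α] (P : α → Prop) [DecidablePred P] [DecidableEq α] (a : α) :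
    (univ.filter P).card =
      ((univ.filter fun z => P z ∧ z ≠ a).card) + (if P a then 1 else 0) := by
  classical
  by_cases h : P a
  · rw [if_pos h]
    have hins : univ.filter P = insert a (univ.filter fun z => P z ∧ z ≠ a) := by
      ext z
      simp only [mem_filter, mem_insert, mem_univ, true_and]
      by_cases hz : z = a
      · subst hz; tauto
      · tauto
    rw [hins, card_insert_of_notMem (by simp)]
  · rw [if_neg h]
    have : (univ.filter P) = univ.filter fun z => P z ∧ z ≠ a := by
      apply Finset.filter_congr
      intro z _
      by_cases hz : z = a
      · subst hz; simp [h]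
      · simp [hz]
    rw [this]
    omega

lemma not_iff_congr_ff {A B B' : Prop} (hB : ¬B) (hB' : ¬B') :
    (¬(A ↔ B')) ↔ (¬(A ↔ B)) := by tauto

lemma not_iff_congr_tt {A B B' : Prop} (hB : B) (hB' : B') :
    (¬(A ↔ B')) ↔ (¬(A ↔ B)) := by tauto

lemma not_iff_not_right {A B : Prop} : (¬(A ↔ ¬B)) ↔ (A ↔ B) := by tauto

set_option maxHeartbeats 1000000 in
theorem zeta_move_cdncross_change'
    {n m : ℕ} (Js : Fin m → Fin n × Fin n) (hJs : ∀ p, (Js p).1 ≤ (Js p).2)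
    (lam : List ℕ)
    (u : Perm (Fin n))
    (vs : Fin m → Perm (Fin n)) (hvs : IsPathFamily Js vs)
    (Z : ZetaData Js lam u vs) :
    (¬ Odd (crossBefore Js vs Z.p (u Z.j) (u Z.j')) →
      cdncrossNum Js (zetaSwap vs Z.p (u Z.j) (u Z.j')) (colOf lam u) =
        cdncrossNum Js vs (colOf lam u)) ∧
    (Odd (crossBefore Js vs Z.p (u Z.j) (u Z.j')) ∧
        ¬ crossingAt Js vs Z.p (u Z.j) (u Z.j') →
      cdncrossNum Js (zetaSwap vs Z.p (u Z.j) (u Z.j')) (colOf lam u) + 1 =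
        cdncrossNum Js vs (colOf lam u)) ∧
    (Odd (crossBefore Js vs Z.p (u Z.j) (u Z.j')) ∧
        crossingAt Js vs Z.p (u Z.j) (u Z.j') →
      cdncrossNum Js (zetaSwap vs Z.p (u Z.j) (u Z.j')) (colOf lam u) =
        cdncrossNum Js vs (colOf lam u) + 1) := by
  classical
  obtain ⟨tc, p, j, j', htc, htcMax, hpMeet, hpMax, hne, hjcol, hjcol', hjcent, hjcent',
    hord, hmax⟩ := Z
  dsimp only at *
  set i : Fin n := u j with hidef
  set i' : Fin n := u j' with hi'def
  set σ : Perm (Fin n) := Equiv.swap i i' with hσdef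
  set vh : Fin m → Perm (Fin n) := zetaSwap vs p i i' with hvhdef
  have hii' : i ≠ i' := fun h => hne (u.injective h)
  have hcoli : colOf lam u i = tc := by
    unfold colOf; rw [hidef, Perm.inv_def, Equiv.symm_apply_apply]; exact hjcol
  have hcoli' : colOf lam u i' = tc := by
    unfold colOf; rw [hi'def, Perm.inv_def, Equiv.symm_apply_apply]; exact hjcol'
  have hpm : (p : ℕ) < m := p.isLt
  have hA1 : ∀ k : ℕ, k ≤ p.1 → posAt vh k = posAt vs k :=
    fun k hk => posAt_hat_le vs p i i' k (le_trans hk (le_of_lt hpm)) hk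
  have hA2 : ∀ k : ℕ, p.1 < k → k ≤ m → ∀ x, posAt vh k x = posAt vs k (σ x) :=
    fun k h1 h2 x => posAt_hat_gt vs p i i' k h2 h1 x
  have hposfix : ∀ k : ℕ, k ≤ m → ∀ x, σ x = x → posAt vh k x = posAt vs k x := by
    intro k hk x hx
    rcases le_or_gt k p.1 with h | h
    · rw [hA1 k h]
    · rw [hA2 k h hk, hx]
  have hfix_of : ∀ x : Fin n, x ≠ i → x ≠ i' → σ x = x :=
    fun x h1 h2 => Equiv.swap_apply_of_ne_of_ne h1 h2
  have hcent_fix : ∀ (q : Fin m) (x : Fin n), σ x = x →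
      (centeredAt Js vh q x ↔ centeredAt Js vs q x) := by
    intro q x hx
    unfold centeredAt
    rw [hposfix q.1 (le_of_lt q.isLt) x hx]
  have hcent_le : ∀ (q : Fin m), q.1 ≤ p.1 → ∀ x,
      (centeredAt Js vh q x ↔ centeredAt Js vs q x) := by
    intro q hq x; unfold centeredAt; rw [hA1 q.1 hq]
  have hcent_gt : ∀ (q : Fin m), p.1 < q.1 → ∀ x,
      (centeredAt Js vh q x ↔ centeredAt Js vs q (σ x)) := by
    intro q hq x; unfold centeredAt; rw [hA2 q.1 hq (le_of_lt q.isLt) x]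
  have hmeet_fix : ∀ (q : Fin m) (x y : Fin n), σ x = x → σ y = y →
      (meetAt Js vh q x y ↔ meetAt Js vs q x y) := by
    intro q x y hx hy; unfold meetAt; rw [hcent_fix q x hx, hcent_fix q y hy]
  have hcross_fix : ∀ (q : Fin m) (x y : Fin n), σ x = x → σ y = y →
      (crossingAt Js vh q x y ↔ crossingAt Js vs q x y) := by
    intro q x y hx hy
    unfold crossingAt
    rw [hmeet_fix q x y hx hy, hposfix q.1 (le_of_lt q.isLt) x hx,
      hposfix q.1 (le_of_lt q.isLt) y hy, hposfix (q.1+1) q.isLt x hx,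
      hposfix (q.1+1) q.isLt y hy]
  have hcross_le : ∀ (q : Fin m), q.1 + 1 ≤ p.1 → ∀ x y,
      (crossingAt Js vh q x y ↔ crossingAt Js vs q x y) := by
    intro q hq x y
    unfold crossingAt meetAt
    rw [hcent_le q (le_trans (Nat.le_succ _) hq) x, hcent_le q (le_trans (Nat.le_succ _) hq) y,
      hA1 q.1 (le_trans (Nat.le_succ _) hq), hA1 (q.1+1) hq]
  have hcb : ∀ (k : Fin m) (x y : Fin n),
      (∀ q : Fin m, q < k → (crossingAt Js vh q x y ↔ crossingAt Js vs q x y)) →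
      crossBefore Js vh k x y = crossBefore Js vs k x y := by
    intro k x y h
    unfold crossBefore
    congr 1
    apply Finset.filter_congr
    intro q _
    exact and_congr_right (fun hqk => h q hqk)
  have hcb_le : ∀ (k : Fin m), k.1 ≤ p.1 → ∀ x y,
      crossBefore Js vh k x y = crossBefore Js vs k x y := by
    intro k hk x y
    refine hcb k x y (fun q hq => hcross_le q ?_ x y)
    have : q.1 < k.1 := hq
    omega
  have hcb_fix : ∀ (k : Fin m) (x y : Fin n), σ x = x → σ y = y →
      crossBefore Js vh k x y = crossBefore Js vs k x y :=
    fun k x y hx hy => hcb k x y (fun q _ => hcross_fix q x y hx hy)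
  have hmeet_p : ∀ x y, meetAt Js vh p x y ↔ meetAt Js vs p x y := by
    intro x y; unfold meetAt; rw [hcent_le p le_rfl x, hcent_le p le_rfl y]
  have hdef_p : ∀ x y, defectiveAt Js vh p x y ↔ defectiveAt Js vs p x y := by
    intro x y; unfold defectiveAt; rw [hmeet_p x y, hcb_le p le_rfl x y]
  have tinj : Function.Injective (typeOf vs) := (typeOf vs).injective
  have hkey : ∀ x0 : Fin n, x0 ≠ i → x0 ≠ i' → colOf lam u x0 = tc →
      centeredAt Js vs p x0 →
      posAt vs (p.1+1) x0 < posAt vs (p.1+1) i ∧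
      posAt vs (p.1+1) x0 < posAt vs (p.1+1) i' := by
    intro x0 hx0i hx0i' hcol hcent
    have huκ : u (u⁻¹ x0) = x0 := u.apply_symm_apply x0
    have hκcol : blockIdx lam ((u⁻¹ x0 : Fin n) : ℕ) = tc := hcol
    have hκj' : u⁻¹ x0 ≠ j' := fun h => hx0i' (by rw [← huκ, h, ← hi'def])
    have hκj : u⁻¹ x0 ≠ j := fun h => hx0i (by rw [← huκ, h, ← hidef])
    have hcentκ : centeredAt Js vs p (u (u⁻¹ x0)) := by rw [huκ]; exact hcent
    have ht1 : typeOf vs x0 < typeOf vs i' := by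
      by_contra hcon
      have hgt : typeOf vs i' < typeOf vs x0 :=
        lt_of_le_of_ne (not_lt.mp hcon) (fun h => hx0i' (tinj h).symm)
      rcases hmax j' (u⁻¹ x0) (fun h => hκj' h.symm) hjcol' hκcol hjcent' hcentκ
          (by rw [huκ]; exact hgt) with h | ⟨h, _⟩
      · rw [huκ] at h; exact absurd h (not_lt.mpr hgt.le)
      · exact hκj' h
    have ht2 : typeOf vs x0 < typeOf vs i := by
      by_contra hcon
      have hgt : typeOf vs i < typeOf vs x0 :=
        lt_of_le_of_ne (not_lt.mp hcon) (fun h => hx0i (tinj h).symm)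
      rcases hmax (u⁻¹ x0) j' hκj' hκcol hjcol' hcentκ hjcent'
          (by rw [huκ]; exact ht1) with h | ⟨_, h⟩
      · exact absurd h (lt_irrefl _)
      · rw [huκ] at h; exact absurd hgt (not_lt.mpr h)
    have hst1 := order_stable Js hJs vs hvs lam u tc p hpMax x0 i hx0i hcol hcoli
      m hpm le_rfl
    have hst2 := order_stable Js hJs vs hvs lam u tc p hpMax x0 i' hx0i' hcol hcoli'
      m hpm le_rfl
    have hty1 : posAt vs m x0 < posAt vs m i := ht2
    have hty2 : posAt vs m x0 < posAt vs m i' := ht1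
    exact ⟨hst1.mp hty1, hst2.mp hty2⟩
  have hm1 : p.1 + 1 ≤ m := hpm
  have hcross_p_mixed : ∀ x y : Fin n,
      colOf lam u x = colOf lam u y →
      meetAt Js vs p x y →
      ((x = i ∨ x = i') ∧ y ≠ i ∧ y ≠ i') ∨ ((y = i ∨ y = i') ∧ x ≠ i ∧ x ≠ i') →
      (crossingAt Js vh p x y ↔ crossingAt Js vs p x y) := by
    intro x y hcolxy hmeet hcase
    unfold crossingAt
    rw [hmeet_p x y, hA1 p.1 le_rfl,
      hA2 (p.1+1) (Nat.lt_succ_self _) hm1 x, hA2 (p.1+1) (Nat.lt_succ_self _) hm1 y]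
    rcases hcase with ⟨hx, hy1, hy2⟩ | ⟨hy, hx1, hx2⟩
    · have hyfix : σ y = y := hfix_of y hy1 hy2
      have hycol : colOf lam u y = tc := by
        rcases hx with h | h
        · rw [← hcolxy, h]; exact hcoli
        · rw [← hcolxy, h]; exact hcoli'
      have hk := hkey y hy1 hy2 hycol hmeet.2
      rw [hyfix]
      have h1 : posAt vs (p.1+1) y < posAt vs (p.1+1) (σ x) := by
        rcases hx with h | h
        · rw [h, hσdef, Equiv.swap_apply_left]; exact hk.2
        · rw [h, hσdef, Equiv.swap_apply_right]; exact hk.1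
      have h2 : posAt vs (p.1+1) y < posAt vs (p.1+1) x := by
        rcases hx with h | h
        · rw [h]; exact hk.1
        · rw [h]; exact hk.2
      have hB' : ¬ (posAt vs (p.1+1) (σ x) < posAt vs (p.1+1) y) := not_lt.mpr h1.le
      have hB : ¬ (posAt vs (p.1+1) x < posAt vs (p.1+1) y) := not_lt.mpr h2.le
      exact and_congr_right (fun _ => not_iff_congr_ff hB hB')
    · have hxfix : σ x = x := hfix_of x hx1 hx2
      have hxcol : colOf lam u x = tc := by
        rcases hy with h | h
        · rw [hcolxy, h]; exact hcoli
        · rw [hcolxy, h]; exact hcoli'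
      have hk := hkey x hx1 hx2 hxcol hmeet.1
      rw [hxfix]
      have h1 : posAt vs (p.1+1) x < posAt vs (p.1+1) (σ y) := by
        rcases hy with h | h
        · rw [h, hσdef, Equiv.swap_apply_left]; exact hk.2
        · rw [h, hσdef, Equiv.swap_apply_right]; exact hk.1
      have h2 : posAt vs (p.1+1) x < posAt vs (p.1+1) y := by
        rcases hy with h | h
        · rw [h]; exact hk.1
        · rw [h]; exact hk.2
      exact and_congr_right (fun _ => not_iff_congr_tt h2 h1)
  have hcflip : ∀ x y : Fin n, ((x = i ∧ y = i') ∨ (x = i' ∧ y = i)) →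
      (crossingAt Js vh p x y ↔ (meetAt Js vs p x y ∧
        ((posAt vs p x < posAt vs p y) ↔ (posAt vs (p.1+1) x < posAt vs (p.1+1) y)))) := by
    intro x y hc
    have hxyne : x ≠ y := by
      rcases hc with ⟨h1, h2⟩ | ⟨h1, h2⟩
      · rw [h1, h2]; exact hii'
      · rw [h1, h2]; exact hii'.symm
    have hdist : posAt vs (p.1+1) x ≠ posAt vs (p.1+1) y :=
      fun h => hxyne ((posAt vs (p.1+1)).injective h)
    unfold crossingAt
    rw [hmeet_p x y, hA1 p.1 le_rfl,
      hA2 (p.1+1) (Nat.lt_succ_self _) hm1 x, hA2 (p.1+1) (Nat.lt_succ_self _) hm1 y]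
    have hBB : (posAt vs (p.1+1) (σ x) < posAt vs (p.1+1) (σ y)) ↔
        ¬ (posAt vs (p.1+1) x < posAt vs (p.1+1) y) := by
      have hσx : σ x = y := by
        rcases hc with ⟨h1, h2⟩ | ⟨h1, h2⟩
        · rw [h1, h2, hσdef, Equiv.swap_apply_left]
        · rw [h1, h2, hσdef, Equiv.swap_apply_right]
      have hσy : σ y = x := by
        rcases hc with ⟨h1, h2⟩ | ⟨h1, h2⟩
        · rw [h1, h2, hσdef, Equiv.swap_apply_right]
        · rw [h1, h2, hσdef, Equiv.swap_apply_left]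
      rw [hσx, hσy]
      constructor
      · intro h; exact not_lt.mpr h.le
      · intro h; exact (lt_or_gt_of_ne hdist).resolve_left h
    rw [hBB]
    exact and_congr_right (fun _ => not_iff_not_right)
  have hmeetii : meetAt Js vs p i i' := ⟨hjcent, hjcent'⟩
  obtain ⟨a, b, hablt, haneb, hacol, hbcol, hmeetab, hoddab, hcrossab, horient, horder⟩ :
      ∃ a b : Fin n, a < b ∧ a ≠ b ∧ colOf lam u a = tc ∧ colOf lam u b = tc ∧
        meetAt Js vs p a b ∧
        (Odd (crossBefore Js vs p a b) ↔ Odd (crossBefore Js vs p i i')) ∧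
        (crossingAt Js vs p a b ↔ crossingAt Js vs p i i') ∧
        ((a = i ∧ b = i') ∨ (a = i' ∧ b = i)) ∧
        (∀ x y : Fin n, x < y → (x = i ∨ x = i') → (y = i ∨ y = i') →
          x = a ∧ y = b) := by
    rcases lt_or_gt_of_ne hii' with h | h
    · refine ⟨i, i', h, hii', hcoli, hcoli', hmeetii, Iff.rfl, Iff.rfl,
        Or.inl ⟨rfl, rfl⟩, ?_⟩
      intro x y hxy hx hy
      rcases hx with rfl | rfl <;> rcases hy with rfl | rfl
      · exact absurd hxy (lt_irrefl _)
      · exact ⟨rfl, rfl⟩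
      · exact absurd hxy (not_lt.mpr h.le)
      · exact absurd hxy (lt_irrefl _)
    · refine ⟨i', i, h, hii'.symm, hcoli', hcoli, ⟨hjcent', hjcent⟩,
        by rw [crossBefore_comm Js vs p i' i hii'.symm],
        crossingAt_comm Js vs p i' i hii'.symm,
        Or.inr ⟨rfl, rfl⟩, ?_⟩
      intro x y hxy hx hy
      rcases hx with rfl | rfl <;> rcases hy with rfl | rfl
      · exact absurd hxy (lt_irrefl _)
      · exact absurd hxy (not_lt.mpr h.le)
      · exact ⟨rfl, rfl⟩
      · exact absurd hxy (lt_irrefl _)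
  set e : (Fin n × Fin n) × Fin m := ((a, b), p) with hedef
  have hcolσ : ∀ x : Fin n, colOf lam u x = tc → colOf lam u (σ x) = tc := by
    intro x hx
    by_cases h1 : x = i
    · rw [h1, hσdef, Equiv.swap_apply_left]; exact hcoli'
    by_cases h2 : x = i'
    · rw [h2, hσdef, Equiv.swap_apply_right]; exact hcoli
    rw [hfix_of x h1 h2]; exact hx
  have hmain : ∀ z : (Fin n × Fin n) × Fin m, z ≠ e →
      ((z.1.1 < z.1.2 ∧ defectiveAt Js vh z.2 z.1.1 z.1.2 ∧
          ¬ crossingAt Js vh z.2 z.1.1 z.1.2 ∧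
          colOf lam u z.1.1 = colOf lam u z.1.2) ↔
        (z.1.1 < z.1.2 ∧ defectiveAt Js vs z.2 z.1.1 z.1.2 ∧
          ¬ crossingAt Js vs z.2 z.1.1 z.1.2 ∧
          colOf lam u z.1.1 = colOf lam u z.1.2)) := by
    rintro ⟨⟨x, y⟩, k⟩ hz
    simp only at *
    by_cases hxy : x < y
    swap
    · simp [hxy]
    have hxyne : x ≠ y := ne_of_lt hxy
    by_cases hcolxy : colOf lam u x = colOf lam u y
    swap
    · simp [hcolxy]
    rcases lt_trichotomy (k : ℕ) (p : ℕ) with hk | hk | hk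
    · have hd : defectiveAt Js vh k x y ↔ defectiveAt Js vs k x y := by
        unfold defectiveAt meetAt
        rw [hcent_le k (le_of_lt hk) x, hcent_le k (le_of_lt hk) y,
          hcb_le k (le_of_lt hk) x y]
      have hc : crossingAt Js vh k x y ↔ crossingAt Js vs k x y := hcross_le k hk x y
      rw [hd, hc]
    · have hkp : k = p := Fin.ext hk
      subst hkp
      by_cases hxi : x = i ∨ x = i'
      · by_cases hyi : y = i ∨ y = i'
        · exfalso
          apply hz
          rcases horder x y hxy hxi hyi with ⟨rfl, rfl⟩
          rfl
        · push_neg at hyi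
          by_cases hmeetc : meetAt Js vs k x y
          · rw [hdef_p x y,
              hcross_p_mixed x y hcolxy hmeetc (Or.inl ⟨hxi, hyi.1, hyi.2⟩)]
          · have h1 : ¬ defectiveAt Js vs k x y := fun h => hmeetc h.1
            have h2 : ¬ defectiveAt Js vh k x y := fun h => hmeetc ((hmeet_p x y).mp h.1)
            simp [h1, h2]
      · push_neg at hxi
        by_cases hyi : y = i ∨ y = i'
        · by_cases hmeetc : meetAt Js vs k x y
          · rw [hdef_p x y,
              hcross_p_mixed x y hcolxy hmeetc (Or.inr ⟨hyi, hxi.1, hxi.2⟩)]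
          · have h1 : ¬ defectiveAt Js vs k x y := fun h => hmeetc h.1
            have h2 : ¬ defectiveAt Js vh k x y := fun h => hmeetc ((hmeet_p x y).mp h.1)
            simp [h1, h2]
        · push_neg at hyi
          have hfx : σ x = x := hfix_of x hxi.1 hxi.2
          have hfy : σ y = y := hfix_of y hyi.1 hyi.2
          rw [hdef_p x y, hcross_fix k x y hfx hfy]
    · by_cases hspec : (x = i ∨ x = i') ∨ (y = i ∨ y = i')
      · have hcolx : colOf lam u x = tc ∧ colOf lam u y = tc := by
          rcases hspec with h | h
          · rcases h with h | h
            · constructor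
              · rw [h]; exact hcoli
              · rw [← hcolxy, h]; exact hcoli
            · constructor
              · rw [h]; exact hcoli'
              · rw [← hcolxy, h]; exact hcoli'
          · rcases h with h | h
            · constructor
              · rw [hcolxy, h]; exact hcoli
              · rw [h]; exact hcoli
            · constructor
              · rw [hcolxy, h]; exact hcoli'
              · rw [h]; exact hcoli'
        have hvs_false : ¬ defectiveAt Js vs k x y := by
          rintro ⟨⟨hcx, hcy⟩, -⟩
          exact hpMax k hk ⟨x, y, hxyne, hcolx.1, hcolx.2, hcx, hcy⟩
        have hvh_false : ¬ defectiveAt Js vh k x y := by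
          rintro ⟨⟨hcx, hcy⟩, -⟩
          have hcx' := (hcent_gt k hk x).mp hcx
          have hcy' := (hcent_gt k hk y).mp hcy
          exact hpMax k hk ⟨σ x, σ y, fun h => hxyne (σ.injective h),
            hcolσ x hcolx.1, hcolσ y hcolx.2, hcx', hcy'⟩
        simp [hvs_false, hvh_false]
      · push_neg at hspec
        have hfx : σ x = x := hfix_of x hspec.1.1 hspec.1.2
        have hfy : σ y = y := hfix_of y hspec.2.1 hspec.2.2
        have hd : defectiveAt Js vh k x y ↔ defectiveAt Js vs k x y := by
          unfold defectiveAt meetAt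
          rw [hcent_fix k x hfx, hcent_fix k y hfy, hcb_fix k x y hfx hfy]
        rw [hd, hcross_fix k x y hfx hfy]
  -- crossing flip at e
  have hcvh : crossingAt Js vh p a b ↔ ¬ crossingAt Js vs p a b := by
    rw [hcflip a b horient]
    constructor
    · rintro ⟨hm, hAB⟩ hc
      exact hc.2 hAB
    · intro hnc
      refine ⟨hmeetab, ?_⟩
      by_contra hAB
      exact hnc ⟨hmeetab, hAB⟩
  have hPHe : (a < b ∧ defectiveAt Js vh p a b ∧ ¬ crossingAt Js vh p a b ∧
      colOf lam u a = colOf lam u b) ↔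
      (Odd (crossBefore Js vs p i i') ∧ crossingAt Js vs p i i') := by
    rw [hdef_p a b, hcvh, not_not, hcrossab]
    constructor
    · rintro ⟨-, hd, hc, -⟩
      exact ⟨hoddab.mp hd.2, hc⟩
    · rintro ⟨ho, hc⟩
      exact ⟨hablt, ⟨hmeetab, hoddab.mpr ho⟩, hc, hacol.trans hbcol.symm⟩
  have hPVe : (a < b ∧ defectiveAt Js vs p a b ∧ ¬ crossingAt Js vs p a b ∧
      colOf lam u a = colOf lam u b) ↔
      (Odd (crossBefore Js vs p i i') ∧ ¬ crossingAt Js vs p i i') := by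
    rw [hcrossab]
    constructor
    · rintro ⟨-, hd, hc, -⟩
      exact ⟨hoddab.mp hd.2, hc⟩
    · rintro ⟨ho, hc⟩
      exact ⟨hablt, ⟨hmeetab, hoddab.mpr ho⟩, hc, hacol.trans hbcol.symm⟩
  have hsplitH := card_filter_split (fun z : (Fin n × Fin n) × Fin m =>
    z.1.1 < z.1.2 ∧ defectiveAt Js vh z.2 z.1.1 z.1.2 ∧
      ¬ crossingAt Js vh z.2 z.1.1 z.1.2 ∧
      colOf lam u z.1.1 = colOf lam u z.1.2) e
  have hsplitV := card_filter_split (fun z : (Fin n × Fin n) × Fin m =>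
    z.1.1 < z.1.2 ∧ defectiveAt Js vs z.2 z.1.1 z.1.2 ∧
      ¬ crossingAt Js vs z.2 z.1.1 z.1.2 ∧
      colOf lam u z.1.1 = colOf lam u z.1.2) e
  simp only [hedef, hPHe] at hsplitH
  simp only [hedef, hPVe] at hsplitV
  have hfeq : (univ.filter fun z : (Fin n × Fin n) × Fin m =>
      (z.1.1 < z.1.2 ∧ defectiveAt Js vh z.2 z.1.1 z.1.2 ∧
        ¬ crossingAt Js vh z.2 z.1.1 z.1.2 ∧
        colOf lam u z.1.1 = colOf lam u z.1.2) ∧ z ≠ ((a, b), p)).card =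
      (univ.filter fun z : (Fin n × Fin n) × Fin m =>
      (z.1.1 < z.1.2 ∧ defectiveAt Js vs z.2 z.1.1 z.1.2 ∧
        ¬ crossingAt Js vs z.2 z.1.1 z.1.2 ∧
        colOf lam u z.1.1 = colOf lam u z.1.2) ∧ z ≠ ((a, b), p)).card := by
    congr 1
    apply Finset.filter_congr
    intro z _
    exact and_congr_left (fun hz => hmain z hz)
  have hH : cdncrossNum Js vh (colOf lam u) =
      (univ.filter fun z : (Fin n × Fin n) × Fin m =>
      (z.1.1 < z.1.2 ∧ defectiveAt Js vs z.2 z.1.1 z.1.2 ∧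
        ¬ crossingAt Js vs z.2 z.1.1 z.1.2 ∧
        colOf lam u z.1.1 = colOf lam u z.1.2) ∧ z ≠ ((a, b), p)).card +
      (if (Odd (crossBefore Js vs p i i') ∧ crossingAt Js vs p i i')
        then 1 else 0) := by
    unfold cdncrossNum
    rw [← hfeq]
    exact hsplitH
  have hV : cdncrossNum Js vs (colOf lam u) =
      (univ.filter fun z : (Fin n × Fin n) × Fin m =>
      (z.1.1 < z.1.2 ∧ defectiveAt Js vs z.2 z.1.1 z.1.2 ∧
        ¬ crossingAt Js vs z.2 z.1.1 z.1.2 ∧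
        colOf lam u z.1.1 = colOf lam u z.1.2) ∧ z ≠ ((a, b), p)).card +
      (if (Odd (crossBefore Js vs p i i') ∧ ¬ crossingAt Js vs p i i')
        then 1 else 0) := by
    unfold cdncrossNum
    exact hsplitV
  refine ⟨?_, ?_, ?_⟩
  · intro hodd
    rw [hH, hV, if_neg (fun h => hodd h.1), if_neg (fun h => hodd h.1)]
  · rintro ⟨ho, hc⟩
    rw [hH, hV, if_neg (fun h => hc h.2), if_pos ⟨ho, hc⟩]
  · rintro ⟨ho, hc⟩
    rw [hH, hV, if_pos ⟨ho, hc⟩, if_neg (fun h => h.2 hc)]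

noncomputable section
open Equiv Finset
open scoped Classical

/-- Lemma 5.3, identity (5.8) / `l:statids`,
`eq:cdncrossid`.  Let `W = δ(U(π,u,yu)) ∈ T_I(G)` with
`ζ(W) = δ(U(π̂,u,ŷu)) ≠ W`, where the `ζ`-move (recorded by `Z`) swaps the
terminal subpaths of `π_{u_j}, π_{u_{j'}}` at the central vertex of
`G_{J_p}`.  Then `cdncross(ζ(W)) = cdncross(W)` if the triple
`(π_{u_j}, π_{u_{j'}}, p)` is proper, `cdncross(ζ(W)) = cdncross(W) − 1` if
it is a defective noncrossing, and `cdncross(ζ(W)) = cdncross(W) + 1` if it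
is a defective crossing (the columns of both tableaux being given by
`colOf lam u`). -/
theorem zeta_move_cdncross_change
    {n m : ℕ} (Js : Fin m → Fin n × Fin n) (hJs : ∀ p, (Js p).1 ≤ (Js p).2)
    (lam : List ℕ) (hsum : lam.sum = n) (hpos : ∀ x ∈ lam, 0 < x)
    (hsort : lam.Pairwise (fun a b => b ≤ a))
    (u : Perm (Fin n))
    (hu : ∀ i j : Fin n, i < j →
      blockIdx lam (i : ℕ) = blockIdx lam (j : ℕ) → u i < u j)
    (vs : Fin m → Perm (Fin n)) (hvs : IsPathFamily Js vs)
    (y : Perm (Fin n)) (hy : inYoung lam y)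
    (hty : typeOf vs = u * y * u⁻¹)
    (Z : ZetaData Js lam u vs) :
    (¬ Odd (crossBefore Js vs Z.p (u Z.j) (u Z.j')) →
      cdncrossNum Js (zetaSwap vs Z.p (u Z.j) (u Z.j')) (colOf lam u) =
        cdncrossNum Js vs (colOf lam u)) ∧
    (Odd (crossBefore Js vs Z.p (u Z.j) (u Z.j')) ∧
        ¬ crossingAt Js vs Z.p (u Z.j) (u Z.j') →
      cdncrossNum Js (zetaSwap vs Z.p (u Z.j) (u Z.j')) (colOf lam u) + 1 =
        cdncrossNum Js vs (colOf lam u)) ∧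
    (Odd (crossBefore Js vs Z.p (u Z.j) (u Z.j')) ∧
        crossingAt Js vs Z.p (u Z.j) (u Z.j') →
      cdncrossNum Js (zetaSwap vs Z.p (u Z.j) (u Z.j')) (colOf lam u) =
        cdncrossNum Js vs (colOf lam u) + 1) :=
  zeta_move_cdncross_change' Js hJs lam u vs hvs Z

end

end
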